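/- Let G = {(r,θ) : 0 ≤ θ ≤ ζ, r ≥ 0} be a two-dimensional wedge of angle ζ ∈ (0,π) (in polar coordinates), with edges ∂G₁ = {θ = 0} and ∂G₂ = {θ = ζ}, inward normals n¹, n², and constant reflection vectors γ¹, γ² normalized so that ⟨γ^j, n^j⟩ = 1, where γ^j makes angle θ_j ∈ (−π/2, π/2) with n^j. Suppose (θ₁+θ₂)/ζ < 1 (so the completely-S condition holds). Then there exists a vector n₀ = s₁n¹ + s₂n² with s₁, s₂ > 0 such that ⟨n₀, γ¹⟩ > 0, ⟨n₀, γ²⟩ > 0, and ⟨n₀, x⟩ > 0 for every x ∈ Ḡ \ {0}. -/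
import Mathlib


open Matrix

/-- for a two-dimensional wedge of angle ζ ∈ (0,π) with constant
reflection vectors γ¹, γ² making angles θ₁, θ₂ ∈ (−π/2,π/2) with the inward
normals n¹, n² (normalized so ⟨γ^j, n^j⟩ = 1), if (θ₁+θ₂)/ζ < 1 then some
strictly positive combination n₀ = s₁n¹ + s₂n² satisfies ⟨n₀,γ¹⟩ > 0,
⟨n₀,γ²⟩ > 0, and ⟨n₀,x⟩ > 0 for all x ∈ Ḡ \ {0}. -/
theorem stmt_14 (ζ θ₁ θ₂ : ℝ)
    (hζ0 : 0 < ζ) (hζπ : ζ < Real.pi)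
    (hθ₁ : θ₁ ∈ Set.Ioo (-(Real.pi / 2)) (Real.pi / 2))
    (hθ₂ : θ₂ ∈ Set.Ioo (-(Real.pi / 2)) (Real.pi / 2))
    (hα : (θ₁ + θ₂) / ζ < 1)
    (G : Set (Fin 2 → ℝ))
    (hG : G = {p | ∃ rad θ : ℝ, 0 ≤ rad ∧ 0 ≤ θ ∧ θ ≤ ζ ∧
      p = ![rad * Real.cos θ, rad * Real.sin θ]})
    (n1 n2 γ1 γ2 : Fin 2 → ℝ)
    (hn1 : n1 = ![0, 1])
    (hn2 : n2 = ![Real.sin ζ, -Real.cos ζ])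
    (hγ1 : γ1 = ![-Real.tan θ₁, 1])
    (hγ2 : γ2 = ![Real.sin ζ - Real.tan θ₂ * Real.cos ζ,
      -Real.cos ζ - Real.tan θ₂ * Real.sin ζ]) :
    ∃ s₁ s₂ : ℝ, 0 < s₁ ∧ 0 < s₂ ∧
      0 < (s₁ • n1 + s₂ • n2) ⬝ᵥ γ1 ∧
      0 < (s₁ • n1 + s₂ • n2) ⬝ᵥ γ2 ∧
      ∀ p ∈ G, p ≠ 0 → 0 < (s₁ • n1 + s₂ • n2) ⬝ᵥ p := by
  obtain ⟨h1l, h1r⟩ := hθ₁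
  obtain ⟨h2l, h2r⟩ := hθ₂
  have hsum : θ₁ + θ₂ < ζ := by
    have := (div_lt_one hζ0).mp hα; linarith
  set a : ℝ := max θ₁ (ζ - Real.pi / 2) with ha
  set b : ℝ := min (Real.pi / 2) (ζ - θ₂) with hb
  have hab : a < b := by
    apply max_lt <;> apply lt_min <;> linarith
  set φ : ℝ := (a + b) / 2 with hφ
  have haφ : a < φ := by rw [hφ]; linarith
  have hφb : φ < b := by rw [hφ]; linarith
  have hφ1 : θ₁ < φ := lt_of_le_of_lt (le_max_left _ _) haφ
  have hφ2 : ζ - Real.pi / 2 < φ := lt_of_le_of_lt (le_max_right _ _) haφ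
  have hφ3 : φ < Real.pi / 2 := lt_of_lt_of_le hφb (min_le_left _ _)
  have hφ4 : φ < ζ - θ₂ := lt_of_lt_of_le hφb (min_le_right _ _)
  have hφl : -(Real.pi/2) < φ := by linarith
  have hsζ : 0 < Real.sin ζ := Real.sin_pos_of_pos_of_lt_pi hζ0 hζπ
  have hcφ : 0 < Real.cos φ := Real.cos_pos_of_mem_Ioo ⟨hφl, hφ3⟩
  have hcφζ : 0 < Real.cos (φ - ζ) :=
    Real.cos_pos_of_mem_Ioo ⟨by linarith, by linarith⟩
  have hc1 : 0 < Real.cos θ₁ := Real.cos_pos_of_mem_Ioo ⟨h1l, h1r⟩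
  have hc2 : 0 < Real.cos θ₂ := Real.cos_pos_of_mem_Ioo ⟨h2l, h2r⟩
  have hs1 : 0 < Real.sin (φ - θ₁) :=
    Real.sin_pos_of_pos_of_lt_pi (by linarith) (by linarith [Real.pi_pos])
  have hs2 : 0 < Real.sin (ζ - θ₂ - φ) :=
    Real.sin_pos_of_pos_of_lt_pi (by linarith) (by linarith)
  refine ⟨Real.cos (φ - ζ) / Real.sin ζ, Real.cos φ / Real.sin ζ,
    div_pos hcφζ hsζ, div_pos hcφ hsζ, ?_, ?_, ?_⟩
  · -- γ1
    rw [hn1, hn2, hγ1]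
    simp only [dotProduct, Fin.sum_univ_two, Pi.add_apply, Pi.smul_apply,
      Matrix.cons_val_zero, Matrix.cons_val_one, Matrix.head_cons, smul_eq_mul]
    have key : (Real.cos (φ - ζ) / Real.sin ζ * 0 + Real.cos φ / Real.sin ζ * Real.sin ζ) *
        (-Real.tan θ₁) + (Real.cos (φ - ζ) / Real.sin ζ * 1 +
        Real.cos φ / Real.sin ζ * -Real.cos ζ) * 1
        = Real.sin (φ - θ₁) / Real.cos θ₁ := by
      rw [Real.tan_eq_sin_div_cos, Real.sin_sub, Real.cos_sub]
      field_simp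
      ring
    rw [key]
    exact div_pos hs1 hc1
  · -- γ2
    rw [hn1, hn2, hγ2]
    simp only [dotProduct, Fin.sum_univ_two, Pi.add_apply, Pi.smul_apply,
      Matrix.cons_val_zero, Matrix.cons_val_one, Matrix.head_cons, smul_eq_mul]
    have key : (Real.cos (φ - ζ) / Real.sin ζ * 0 + Real.cos φ / Real.sin ζ * Real.sin ζ) *
        (Real.sin ζ - Real.tan θ₂ * Real.cos ζ) + (Real.cos (φ - ζ) / Real.sin ζ * 1 +
        Real.cos φ / Real.sin ζ * -Real.cos ζ) *
        (-Real.cos ζ - Real.tan θ₂ * Real.sin ζ)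
        = Real.sin (ζ - θ₂ - φ) / Real.cos θ₂ := by
      rw [Real.tan_eq_sin_div_cos]
      have e1 : ζ - θ₂ - φ = (ζ - φ) - θ₂ := by ring
      rw [e1, Real.sin_sub (ζ - φ), Real.sin_sub ζ φ, Real.cos_sub ζ φ, Real.cos_sub φ ζ]
      field_simp
      ring
    rw [key]
    exact div_pos hs2 hc2
  · -- points of the wedge
    intro p hp hp0
    rw [hG] at hp
    obtain ⟨r, θ, hr, hθ0, hθζ, hpe⟩ := hp
    have hrpos : 0 < r := by
      rcases lt_or_eq_of_le hr with h | h
      · exact h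
      · exfalso; apply hp0
        rw [hpe, ← h]
        funext i
        fin_cases i <;> simp
    rw [hn1, hn2, hpe]
    simp only [dotProduct, Fin.sum_univ_two, Pi.add_apply, Pi.smul_apply,
      Matrix.cons_val_zero, Matrix.cons_val_one, Matrix.head_cons, smul_eq_mul]
    have key : (Real.cos (φ - ζ) / Real.sin ζ * 0 + Real.cos φ / Real.sin ζ * Real.sin ζ) *
        (r * Real.cos θ) + (Real.cos (φ - ζ) / Real.sin ζ * 1 +
        Real.cos φ / Real.sin ζ * -Real.cos ζ) * (r * Real.sin θ)
        = r * Real.cos (θ - φ) := by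
      rw [Real.cos_sub θ φ, Real.cos_sub φ ζ]
      field_simp
      ring
    rw [key]
    have hcθφ : 0 < Real.cos (θ - φ) :=
      Real.cos_pos_of_mem_Ioo ⟨by linarith, by linarith⟩
    positivity
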